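/- Let G = K_{n_1,…,n_r} be a complete r-partite graph with r ≥ 2 and n_1 ≤ ⋯ ≤ n_r, and set n' = n_1 + ⋯ + n_{r−1}. If n_r > n', then G contains a path on 2n' + 1 vertices (a path of length 2n'), which equals 2n − max{n+1, 2·n_r}, the height of the binomial edge ideal J_G. -/

import Mathlib

/-- The first vertex (as a natural number) of the `k`-th part, i.e. `Σ_{i<k} ν i`. -/
def partStart {r : ℕ} (ν : Fin r → ℕ) (k : Fin r) : ℕ := ∑ i ∈ Finset.Iio k, ν i

/-- The natural number `j` is a vertex lying in the `k`-th part `V_k`. -/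
def inPart {r : ℕ} (ν : Fin r → ℕ) (k : Fin r) (j : ℕ) : Prop :=
  partStart ν k ≤ j ∧ j < partStart ν k + ν k

/-- Vertices `u`, `v` lie in different parts. -/
def crossPair {r : ℕ} (ν : Fin r → ℕ) (u v : ℕ) : Prop :=
  ∀ k : Fin r, ¬ (inPart ν k u ∧ inPart ν k v)

/-- The complete multipartite graph `K_{n_1,…,n_r}` on `Fin n`, `n = Σ ν i`:
two vertices are adjacent iff they lie in different parts. -/
def partiteGraph (r n : ℕ) (ν : Fin r → ℕ) : SimpleGraph (Fin n) where
  Adj u v := u ≠ v ∧ crossPair ν u v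
  symm := ⟨by
    rintro u v ⟨h1, h2⟩
    exact ⟨h1.symm, fun k hk => h2 k ⟨hk.2, hk.1⟩⟩⟩
  loopless := ⟨fun u h => h.1 rfl⟩

lemma zigzag {V : Type*} (G : SimpleGraph V) (A B : ℕ → V) (s : ℕ)
    (hAinj : ∀ i j, i ≤ s → j ≤ s → A i = A j → i = j)
    (hBinj : ∀ i j, i < s → j < s → B i = B j → i = j)
    (hAB : ∀ i j, i ≤ s → j < s → A i ≠ B j)
    (hadj1 : ∀ i, i < s → G.Adj (A i) (B i))
    (hadj2 : ∀ i, i < s → G.Adj (B i) (A (i + 1))) :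
    ∃ p : G.Walk (A 0) (A s), p.IsPath ∧ p.length = 2 * s := by
  have main : ∀ d i, i + d = s →
      ∃ p : G.Walk (A i) (A s), p.IsPath ∧ p.length = 2 * d ∧
        ∀ x ∈ p.support, (∃ j, i ≤ j ∧ j ≤ s ∧ x = A j) ∨ (∃ j, i ≤ j ∧ j < s ∧ x = B j) := by
    intro d
    induction d with
    | zero =>
      intro i hi
      have : i = s := by omega
      subst this
      exact ⟨SimpleGraph.Walk.nil, by simp, by simp, by
        intro x hx
        simp at hx
        exact Or.inl ⟨_, le_rfl, le_rfl, hx⟩⟩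
    | succ d ih =>
      intro i hi
      have his : i < s := by omega
      obtain ⟨p, hp, hlen, hsup⟩ := ih (i + 1) (by omega)
      refine ⟨SimpleGraph.Walk.cons (hadj1 i his) (SimpleGraph.Walk.cons (hadj2 i his) p),
        ?_, by simp [hlen]; omega, ?_⟩
      · rw [SimpleGraph.Walk.cons_isPath_iff, SimpleGraph.Walk.cons_isPath_iff]
        refine ⟨⟨hp, ?_⟩, ?_⟩
        · intro hmem
          rcases hsup _ hmem with ⟨j, hj1, hj2, hj3⟩ | ⟨j, hj1, hj2, hj3⟩
          · exact (hAB j i (by omega) his) (by rw [← hj3])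
          · have := hBinj i j his hj2 hj3; omega
        · simp only [SimpleGraph.Walk.support_cons, List.mem_cons]
          rintro (h | hmem)
          · exact hAB i i (by omega) his h
          · rcases hsup _ hmem with ⟨j, hj1, hj2, hj3⟩ | ⟨j, hj1, hj2, hj3⟩
            · have := hAinj i j (by omega) hj2 hj3; omega
            · exact hAB i j (by omega) hj2 hj3
      · intro x hx
        simp only [SimpleGraph.Walk.support_cons, List.mem_cons] at hx
        rcases hx with rfl | rfl | hx
        · exact Or.inl ⟨i, le_rfl, by omega, rfl⟩
        · exact Or.inr ⟨i, le_rfl, his, rfl⟩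
        · rcases hsup _ hx with ⟨j, hj1, hj2, hj3⟩ | ⟨j, hj1, hj2, hj3⟩
          · exact Or.inl ⟨j, by omega, hj2, hj3⟩
          · exact Or.inr ⟨j, by omega, hj2, hj3⟩
  obtain ⟨p, hp, hlen, _⟩ := main s 0 (by omega)
  exact ⟨p, hp, hlen⟩

/-- If `n_r > n' = n_1 + ⋯ + n_{r-1}`, then `K_{n_1,…,n_r}` contains a
path on `2n' + 1` vertices, i.e. a path of length `2n'`; and
`2n' = 2n - max {n + 1, 2 n_r}`, the height of the binomial edge ideal `J_G`. -/
theorem stmt18 (r : ℕ) (hr : 2 ≤ r)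
    (ν : Fin r → ℕ) (hpos : ∀ i, 1 ≤ ν i) (hmono : Monotone ν)
    (n : ℕ) (hn : n = ∑ i, ν i)
    (hgt : ∑ i ∈ Finset.Iio (⟨r - 1, by omega⟩ : Fin r), ν i < ν ⟨r - 1, by omega⟩) :
    (∃ (u v : Fin n) (p : (partiteGraph r n ν).Walk u v),
      p.IsPath ∧ p.length = 2 * ∑ i ∈ Finset.Iio (⟨r - 1, by omega⟩ : Fin r), ν i) ∧
    2 * ∑ i ∈ Finset.Iio (⟨r - 1, by omega⟩ : Fin r), ν i =
      2 * n - max (n + 1) (2 * ν ⟨r - 1, by omega⟩) := by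
  set L : Fin r := ⟨r - 1, by omega⟩ with hL
  set s : ℕ := ∑ i ∈ Finset.Iio L, ν i with hs
  -- n = s + ν L
  have huniv : (Finset.univ : Finset (Fin r)) = insert L (Finset.Iio L) := by
    ext k
    simp only [Finset.mem_univ, Finset.mem_insert, Finset.mem_Iio, true_iff]
    have hk := k.isLt
    rcases Nat.lt_or_ge k.val (r - 1) with h | h
    · right; exact Fin.lt_def.mpr h
    · left; exact Fin.ext (by simpa [hL] using by omega)
  have hsum : n = ν L + s := by
    rw [hn, huniv, Finset.sum_insert (by simp)]
  have hslt : s < ν L := hgt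
  have hn0 : 0 < n := by omega
  -- cross lemma
  have key : ∀ x y : ℕ, x < s → s ≤ y → crossPair ν x y := by
    rintro x y hx hy k ⟨hkx, hky⟩
    by_cases hk : k = L
    · subst hk
      have h1 : partStart ν L = s := hs.symm
      have h2 := hkx.1
      omega
    · have hk' : k < L := by
        rw [Fin.lt_def]
        have h3 : (L : ℕ) = r - 1 := rfl
        have h4 := k.isLt
        have h5 : k.val ≠ r - 1 := fun h => hk (Fin.ext (by simpa [hL] using h))
        omega
      have hle : partStart ν k + ν k ≤ s := by
        have hsub : insert k (Finset.Iio k) ⊆ Finset.Iio L := by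
          intro j hj
          simp only [Finset.mem_insert, Finset.mem_Iio] at hj ⊢
          rcases hj with rfl | hj
          · exact hk'
          · exact hj.trans hk'
        have := Finset.sum_le_sum_of_subset (f := ν) hsub
        rw [Finset.sum_insert (by simp)] at this
        rw [partStart, Nat.add_comm]
        exact this
      have h2 := hky.2
      omega
  -- vertices
  have hAlt : ∀ i, i ≤ s → s + i < n := by intro i hi; omega
  have hBlt : ∀ i, i < s → i < n := by intro i hi; omega
  set A : ℕ → Fin n := fun i => ⟨(s + i) % n, Nat.mod_lt _ hn0⟩ with hA
  set B : ℕ → Fin n := fun i => ⟨i % n, Nat.mod_lt _ hn0⟩ with hB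
  have hAval : ∀ i, i ≤ s → (A i : ℕ) = s + i := fun i hi =>
    Nat.mod_eq_of_lt (hAlt i hi)
  have hBval : ∀ i, i < s → (B i : ℕ) = i := fun i hi =>
    Nat.mod_eq_of_lt (by omega)
  have hadjAB : ∀ i j, i ≤ s → j < s → (partiteGraph r n ν).Adj (A i) (B j) := by
    intro i j hi hj
    show A i ≠ B j ∧ crossPair ν (A i) (B j)
    constructor
    · intro h
      have := congrArg Fin.val h
      rw [hAval i hi, hBval j hj] at this
      omega
    · have h1 := hAval i hi
      have h2 := hBval j hj
      have := key (B j) (A i) (by omega) (by omega)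
      intro k hk
      exact this k ⟨hk.2, hk.1⟩
  obtain ⟨p, hp, hlen⟩ := zigzag (partiteGraph r n ν) A B s
    (fun i j hi hj h => by
      have := congrArg Fin.val h
      rw [hAval i hi, hAval j hj] at this
      omega)
    (fun i j hi hj h => by
      have := congrArg Fin.val h
      rw [hBval i hi, hBval j hj] at this
      omega)
    (fun i j hi hj h => by
      have := congrArg Fin.val h
      rw [hAval i hi, hBval j hj] at this
      omega)
    (fun i hi => hadjAB i i (by omega) hi)
    (fun i hi => ((partiteGraph r n ν).adj_symm (hadjAB (i + 1) i (by omega) hi)))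
  refine ⟨⟨A 0, A s, p, hp, hlen⟩, ?_⟩
  omega
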